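/- arXiv:2306.02086 — 2 statements merged into one kernel-verified Lean document; each statement's English description precedes it below -/
import Mathlib

section
/- Let (Ω, Σ, μ) be a semifinite, decomposable measure space with μ ≠ 0 and let 𝒰 be an ultrafilter on the measure algebra of (Ω, μ). Then the assignment [f] ↦ lim_𝒰 f is a well-defined unital ℂ-algebra homomorphism ω_𝒰 : L^∞(Ω, μ) → ℂ, and for every measurable F ⊆ Ω one has F ∈ 𝒰 if and only if ω_𝒰([1_F]) = 1. -/
open MeasureTheory

/-- An *ultrafilter on the measure algebra* of `(Ω, μ)`: a collection of measurable,
non-null subsets of `Ω`, closed under intersection and under almost-everywhere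
enlargement, containing every measurable set or its complement. -/
structure IsMeasureUltrafilter {Ω : Type*} [MeasurableSpace Ω] (μ : Measure Ω)
    (U : Set (Set Ω)) : Prop where
  measurableSet_of_mem : ∀ F ∈ U, MeasurableSet F
  not_null : ∀ F ∈ U, μ F ≠ 0
  inter_mem : ∀ F ∈ U, ∀ G ∈ U, F ∩ G ∈ U
  mem_of_ae_subset : ∀ F ∈ U, ∀ G : Set Ω, MeasurableSet G → μ (F \ G) = 0 → G ∈ U
  mem_or_compl_mem : ∀ F : Set Ω, MeasurableSet F → F ∈ U ∨ Fᶜ ∈ U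

/-- `UltraLim μ U f a` means `lim_U f = a`: for every `ε > 0` there is `F ∈ U` such that
all averages of `f` over measurable subsets of `F` of finite positive measure are within
`ε` of `a`. -/
def UltraLim {Ω : Type*} [MeasurableSpace Ω] (μ : Measure Ω) (U : Set (Set Ω))
    (f : Ω → ℂ) (a : ℂ) : Prop :=
  ∀ ε : ℝ, 0 < ε → ∃ F ∈ U, ∀ X : Set Ω, X ⊆ F → MeasurableSet X →
    0 < μ X → μ X < ⊤ → ‖(μ X).toReal⁻¹ • ∫ x in X, f x ∂μ - a‖ < ε

/-- A measure is *semifinite* if every measurable set of infinite measure contains a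
measurable subset of finite positive measure. -/
def Semifinite {Ω : Type*} [MeasurableSpace Ω] (μ : Measure Ω) : Prop :=
  ∀ E : Set Ω, MeasurableSet E → μ E = ⊤ →
    ∃ F : Set Ω, F ⊆ E ∧ MeasurableSet F ∧ 0 < μ F ∧ μ F < ⊤

universe u

/-- A measure is *decomposable* if there is a partition of `Ω` into measurable sets of
finite measure which detects measurability and along which `μ` sums. -/
def Decomposable {Ω : Type u} [MeasurableSpace Ω] (μ : Measure Ω) : Prop :=
  ∃ (ι : Type u) (P : ι → Set Ω),
    (∀ i, MeasurableSet (P i)) ∧ (∀ i, μ (P i) < ⊤) ∧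
    (Pairwise fun i j => Disjoint (P i) (P j)) ∧
    (⋃ i, P i) = Set.univ ∧
    (∀ E : Set Ω, (∀ i, MeasurableSet (E ∩ P i)) → MeasurableSet E) ∧
    (∀ E : Set Ω, MeasurableSet E → μ E = ∑' i, μ (E ∩ P i))

open Filter in
/-- `ℂ`-algebra structure on the algebra of germs of `ℂ`-valued functions along a filter. -/
noncomputable instance germAlgebra {α : Type*} {l : Filter α} :
    Algebra ℂ (Filter.Germ l ℂ) :=
  Algebra.ofModule
    (fun r x y => Filter.Germ.inductionOn₂ x y fun f g => by
      simp only [← Filter.Germ.coe_smul, ← Filter.Germ.coe_mul, smul_mul_assoc])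
    (fun r x y => Filter.Germ.inductionOn₂ x y fun f g => by
      simp only [← Filter.Germ.coe_smul, ← Filter.Germ.coe_mul, mul_smul_comm])

/-- `L^∞(Ω, μ)`: the algebra of essentially bounded measurable functions `Ω → ℂ` modulo
equality `μ`-almost everywhere, realized as the subalgebra of the algebra of germs along
the `μ`-a.e. filter consisting of germs of essentially bounded measurable functions. -/
noncomputable def Linfty {Ω : Type*} [MeasurableSpace Ω] (μ : Measure Ω) :
    Subalgebra ℂ (Filter.Germ (MeasureTheory.ae μ) ℂ) where
  carrier := {x | ∃ f : Ω → ℂ, Measurable f ∧ (∃ C : ℝ, ∀ᵐ ω ∂μ, ‖f ω‖ ≤ C) ∧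
    x = (f : Filter.Germ (MeasureTheory.ae μ) ℂ)}
  mul_mem' := by
    rintro x y ⟨f, hf, ⟨Cf, hCf⟩, rfl⟩ ⟨g, hg, ⟨Cg, hCg⟩, rfl⟩
    refine ⟨f * g, hf.mul hg, ⟨|Cf| * |Cg|, ?_⟩, (Filter.Germ.coe_mul f g).symm⟩
    filter_upwards [hCf, hCg] with ω h1 h2
    calc ‖(f * g) ω‖ = ‖f ω‖ * ‖g ω‖ := by simp [norm_mul]
      _ ≤ |Cf| * |Cg| :=
        mul_le_mul (h1.trans (le_abs_self _)) (h2.trans (le_abs_self _)) (norm_nonneg _)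
          (abs_nonneg _)
  add_mem' := by
    rintro x y ⟨f, hf, ⟨Cf, hCf⟩, rfl⟩ ⟨g, hg, ⟨Cg, hCg⟩, rfl⟩
    refine ⟨f + g, hf.add hg, ⟨|Cf| + |Cg|, ?_⟩, (Filter.Germ.coe_add f g).symm⟩
    filter_upwards [hCf, hCg] with ω h1 h2
    calc ‖(f + g) ω‖ ≤ ‖f ω‖ + ‖g ω‖ := norm_add_le _ _
      _ ≤ |Cf| + |Cg| := add_le_add (h1.trans (le_abs_self _)) (h2.trans (le_abs_self _))
  one_mem' :=
    ⟨fun _ => 1, measurable_const, ⟨1, Filter.Eventually.of_forall fun _ => by simp⟩,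
      (Filter.Germ.coe_one (l := MeasureTheory.ae μ)).symm⟩
  zero_mem' :=
    ⟨fun _ => 0, measurable_const, ⟨0, Filter.Eventually.of_forall fun _ => by simp⟩,
      (Filter.Germ.coe_zero (l := MeasureTheory.ae μ)).symm⟩
  algebraMap_mem' := by
    intro r
    refine ⟨fun _ => r, measurable_const,
      ⟨‖r‖, Filter.Eventually.of_forall fun _ => le_rfl⟩, ?_⟩
    rw [Algebra.algebraMap_eq_smul_one, ← Filter.Germ.coe_one (l := MeasureTheory.ae μ),
      ← Filter.Germ.coe_smul]
    congr 1
    funext ω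
    simp

/-- The element of `L^∞(Ω, μ)` determined by a measurable, essentially bounded function. -/
noncomputable def LinftyMk {Ω : Type*} [MeasurableSpace Ω] (μ : Measure Ω) (f : Ω → ℂ)
    (hf : Measurable f) (C : ℝ) (hC : ∀ᵐ ω ∂μ, ‖f ω‖ ≤ C) : Linfty μ :=
  ⟨(f : Filter.Germ (MeasureTheory.ae μ) ℂ), ⟨f, hf, ⟨C, hC⟩, rfl⟩⟩

/-- The class `[1_F]` in `L^∞(Ω, μ)` of the indicator function of a measurable set `F`. -/
noncomputable def indL {Ω : Type*} [MeasurableSpace Ω] (μ : Measure Ω) (F : Set Ω)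
    (hF : MeasurableSet F) : Linfty μ :=
  LinftyMk μ (F.indicator fun _ => (1 : ℂ)) (measurable_const.indicator hF) 1
    (Filter.Eventually.of_forall fun ω => by
      by_cases h : ω ∈ F <;> simp [Set.indicator_apply, h])
section CharacterConstruction

open Filter MeasureTheory

variable {Ω : Type u} [MeasurableSpace Ω] {μ : Measure Ω} {U : Set (Set Ω)}

lemma IsMeasureUltrafilter.univ_mem (hU : IsMeasureUltrafilter μ U) : Set.univ ∈ U := by
  rcases hU.mem_or_compl_mem Set.univ MeasurableSet.univ with h | h
  · exact h
  · exact (hU.not_null _ h (by simp)).elim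

/-- The filter on `Ω` generated by an ultrafilter on the measure algebra. -/
def UFilter (hU : IsMeasureUltrafilter μ U) : Filter Ω where
  sets := {S | ∃ F ∈ U, μ (F \ S) = 0}
  univ_sets := ⟨Set.univ, hU.univ_mem, by simp⟩
  sets_of_superset := by
    rintro S T ⟨F, hF, h0⟩ hST
    exact ⟨F, hF, measure_mono_null (Set.diff_subset_diff_right hST) h0⟩
  inter_sets := by
    rintro S T ⟨F, hF, h0⟩ ⟨G, hG, h1⟩
    refine ⟨F ∩ G, hU.inter_mem F hF G hG,
      measure_mono_null ?_ (measure_union_null h0 h1)⟩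
    intro x hx
    rcases hx with ⟨⟨hxF, hxG⟩, hx⟩
    by_cases hS : x ∈ S
    · exact Or.inr ⟨hxG, fun hT => hx ⟨hS, hT⟩⟩
    · exact Or.inl ⟨hxF, hS⟩

lemma mem_UFilter_of_mem (hU : IsMeasureUltrafilter μ U) {F : Set Ω} (hF : F ∈ U) :
    F ∈ UFilter hU := ⟨F, hF, by simp⟩

lemma UFilter_le_ae (hU : IsMeasureUltrafilter μ U) : UFilter hU ≤ MeasureTheory.ae μ := by
  intro S hS
  exact ⟨Set.univ, hU.univ_mem, by simpa [Set.diff_eq] using MeasureTheory.mem_ae_iff.1 hS⟩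

instance UFilter_neBot (hU : IsMeasureUltrafilter μ U) : (UFilter hU).NeBot := by
  constructor
  intro h
  have : (∅ : Set Ω) ∈ UFilter hU := by rw [h]; trivial
  obtain ⟨F, hF, h0⟩ := this
  exact hU.not_null F hF (by simpa using h0)

lemma exists_limit (hU : IsMeasureUltrafilter μ U) {f : Ω → ℂ} (hf : Measurable f)
    {C : ℝ} (hC : ∀ᵐ x ∂μ, ‖f x‖ ≤ C) :
    ∃ a : ℂ, ∀ ε : ℝ, 0 < ε → f ⁻¹' Metric.closedBall a ε ∈ U := by
  haveI : (Filter.map f (UFilter hU)).NeBot := Filter.map_neBot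
  have hball : Metric.closedBall (0 : ℂ) C ∈ Filter.map f (UFilter hU) := by
    have : {x | ‖f x‖ ≤ C} ∈ UFilter hU := UFilter_le_ae hU hC
    refine Filter.mem_map.2 (Filter.mem_of_superset this ?_)
    intro x hx
    simpa [Metric.mem_closedBall, dist_eq_norm] using hx
  obtain ⟨a, -, ha⟩ := (isCompact_closedBall (0 : ℂ) C).exists_clusterPt
    (Filter.le_principal_iff.2 hball)
  refine ⟨a, fun ε hε => ?_⟩
  rcases hU.mem_or_compl_mem (f ⁻¹' Metric.closedBall a ε)
    (hf measurableSet_closedBall) with h | h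
  · exact h
  · exfalso
    have h1 : (Metric.closedBall a ε)ᶜ ∈ Filter.map f (UFilter hU) := by
      refine Filter.mem_map.2 ?_
      have := mem_UFilter_of_mem hU h
      simpa [Set.preimage_compl] using this
    obtain ⟨z, hz1, hz2⟩ := clusterPt_iff_nonempty.1 ha (Metric.ball_mem_nhds a hε) h1
    exact hz2 (Metric.ball_subset_closedBall hz1)

lemma tendsto_of_closedBall (hU : IsMeasureUltrafilter μ U) {f : Ω → ℂ} {a : ℂ}
    (h : ∀ ε : ℝ, 0 < ε → f ⁻¹' Metric.closedBall a ε ∈ U) :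
    Filter.Tendsto f (UFilter hU) (nhds a) := by
  rw [Metric.tendsto_nhds]
  intro ε hε
  have hmem : f ⁻¹' Metric.closedBall a (ε / 2) ∈ UFilter hU :=
    mem_UFilter_of_mem hU (h (ε / 2) (by linarith))
  filter_upwards [hmem] with x hx
  have : dist (f x) a ≤ ε / 2 := hx
  linarith

lemma Linfty_exists_rep {Ω : Type u} [MeasurableSpace Ω] {μ : Measure Ω} (x : Linfty μ) :
    ∃ f : Ω → ℂ, Measurable f ∧ (∃ C : ℝ, ∀ᵐ ω ∂μ, ‖f ω‖ ≤ C) ∧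
      (x : Filter.Germ (MeasureTheory.ae μ) ℂ) = (f : Filter.Germ (MeasureTheory.ae μ) ℂ) := x.2

/-- The character as a bare function: the limit along `UFilter hU` of a chosen
representative. -/
noncomputable def charFun (hU : IsMeasureUltrafilter μ U) (x : Linfty μ) : ℂ :=
  limUnder (UFilter hU) (Linfty_exists_rep x).choose

lemma tendsto_charFun (hU : IsMeasureUltrafilter μ U) (x : Linfty μ) {f : Ω → ℂ}
    (hxf : (x : Filter.Germ (MeasureTheory.ae μ) ℂ) = (f : Filter.Germ (MeasureTheory.ae μ) ℂ)) :
    Filter.Tendsto f (UFilter hU) (nhds (charFun hU x)) := by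
  obtain ⟨hgm, ⟨C, hC⟩, hxg⟩ := (Linfty_exists_rep x).choose_spec
  set g := (Linfty_exists_rep x).choose with hgdef
  obtain ⟨a, ha⟩ := exists_limit hU hgm hC
  have hta : Filter.Tendsto g (UFilter hU) (nhds a) := tendsto_of_closedBall hU ha
  have hlim : charFun hU x = a := hta.limUnder_eq
  have hfg : g =ᶠ[MeasureTheory.ae μ] f := Filter.Germ.coe_eq.1 (hxg ▸ hxf)
  rw [hlim]
  exact hta.congr' (hfg.filter_mono (UFilter_le_ae hU))

/-- The character `ω_𝒰 : L^∞(Ω, μ) → ℂ` as an algebra homomorphism. -/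
noncomputable def charHom (hU : IsMeasureUltrafilter μ U) : Linfty μ →ₐ[ℂ] ℂ where
  toFun := charFun hU
  map_one' := by
    have h1 : Filter.Tendsto (fun _ : Ω => (1 : ℂ)) (UFilter hU) (nhds (charFun hU 1)) :=
      tendsto_charFun hU 1 (by rw [OneMemClass.coe_one, ← Filter.Germ.coe_one (l := MeasureTheory.ae μ)]; rfl)
    exact tendsto_nhds_unique h1 tendsto_const_nhds
  map_mul' := by
    intro x y
    obtain ⟨f, hf, -, hxf⟩ := Linfty_exists_rep x
    obtain ⟨g, hg, -, hyg⟩ := Linfty_exists_rep y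
    have hx := tendsto_charFun hU x hxf
    have hy := tendsto_charFun hU y hyg
    have hxy : Filter.Tendsto (fun ω => f ω * g ω) (UFilter hU)
        (nhds (charFun hU (x * y))) := by
      refine tendsto_charFun hU (x * y) ?_
      push_cast [hxf, hyg]
      rw [← Filter.Germ.coe_mul]
      rfl
    exact tendsto_nhds_unique hxy (hx.mul hy)
  map_zero' := by
    have h0 : Filter.Tendsto (fun _ : Ω => (0 : ℂ)) (UFilter hU) (nhds (charFun hU 0)) :=
      tendsto_charFun hU 0 (by rw [ZeroMemClass.coe_zero, ← Filter.Germ.coe_zero (l := MeasureTheory.ae μ)]; rfl)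
    exact tendsto_nhds_unique h0 tendsto_const_nhds
  map_add' := by
    intro x y
    obtain ⟨f, hf, -, hxf⟩ := Linfty_exists_rep x
    obtain ⟨g, hg, -, hyg⟩ := Linfty_exists_rep y
    have hx := tendsto_charFun hU x hxf
    have hy := tendsto_charFun hU y hyg
    have hxy : Filter.Tendsto (fun ω => f ω + g ω) (UFilter hU)
        (nhds (charFun hU (x + y))) := by
      refine tendsto_charFun hU (x + y) ?_
      push_cast [hxf, hyg]
      rw [← Filter.Germ.coe_add]
      rfl
    exact tendsto_nhds_unique hxy (hx.add hy)
  commutes' := by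
    intro r
    have hcoe : (algebraMap ℂ (Filter.Germ (MeasureTheory.ae μ) ℂ) r)
        = ((fun _ : Ω => r) : Filter.Germ (MeasureTheory.ae μ) ℂ) := by
      rw [Algebra.algebraMap_eq_smul_one, ← Filter.Germ.coe_one (l := MeasureTheory.ae μ),
        ← Filter.Germ.coe_smul]
      congr 1
      funext ω
      simp
    have h : Filter.Tendsto (fun _ : Ω => r) (UFilter hU)
        (nhds (charFun hU (algebraMap ℂ (Linfty μ) r))) := by
      refine tendsto_charFun hU _ ?_
      rw [← hcoe]
      rfl
    simpa using tendsto_nhds_unique h tendsto_const_nhds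

lemma ultraLim_of_closedBall {f : Ω → ℂ} (hf : Measurable f) {a : ℂ}
    (h : ∀ ε : ℝ, 0 < ε → f ⁻¹' Metric.closedBall a ε ∈ U) : UltraLim μ U f a := by
  intro ε hε
  refine ⟨f ⁻¹' Metric.closedBall a (ε / 2), h _ (by linarith),
    fun X hXsub hXm hX0 hXfin => ?_⟩
  have hc : 0 < (μ X).toReal := ENNReal.toReal_pos hX0.ne' hXfin.ne
  have hbd : ∀ x ∈ X, ‖f x - a‖ ≤ ε / 2 := by
    intro x hx
    have := hXsub hx
    simpa [Metric.mem_closedBall, dist_eq_norm] using this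
  have hint : IntegrableOn f X μ := by
    refine MeasureTheory.Measure.integrableOn_of_bounded hXfin.ne
      hf.aestronglyMeasurable (M := ‖a‖ + ε / 2) ?_
    rw [MeasureTheory.ae_restrict_iff' hXm]
    refine Filter.Eventually.of_forall fun x hx => ?_
    calc ‖f x‖ = ‖a + (f x - a)‖ := by ring_nf
      _ ≤ ‖a‖ + ‖f x - a‖ := norm_add_le _ _
      _ ≤ ‖a‖ + ε / 2 := by linarith [hbd x hx]
  have hia : IntegrableOn (fun _ => a) X μ := by
    simp [MeasureTheory.integrableOn_const, hXfin]
  have h1 : ∫ x in X, f x ∂μ - (μ X).toReal • a = ∫ x in X, (f x - a) ∂μ := by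
    rw [MeasureTheory.integral_sub hint hia, MeasureTheory.setIntegral_const]
    rfl
  have h2 : ‖∫ x in X, (f x - a) ∂μ‖ ≤ ε / 2 * (μ X).toReal :=
    MeasureTheory.norm_setIntegral_le_of_norm_le_const hXfin hbd
  calc ‖(μ X).toReal⁻¹ • ∫ x in X, f x ∂μ - a‖
      = ‖(μ X).toReal⁻¹ • (∫ x in X, f x ∂μ - (μ X).toReal • a)‖ := by
        rw [smul_sub, smul_smul, inv_mul_cancel₀ hc.ne', one_smul]
    _ = (μ X).toReal⁻¹ * ‖∫ x in X, (f x - a) ∂μ‖ := by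
        rw [h1, norm_smul, Real.norm_eq_abs, abs_of_nonneg (by positivity)]
    _ ≤ (μ X).toReal⁻¹ * (ε / 2 * (μ X).toReal) := by
        gcongr
    _ = ε / 2 := by field_simp
    _ < ε := by linarith

end CharacterConstruction

/-- Theorem II.5 and Theorem II.7, second half. Every ultrafilter `𝒰` on
the measure algebra determines a character `ω_𝒰` of `L^∞(Ω, μ)` by `ω_𝒰([f]) = lim_𝒰 f`,
and `F ∈ 𝒰` if and only if `ω_𝒰([1_F]) = 1`. -/
theorem ultrafilter_gives_character {Ω : Type u} [MeasurableSpace Ω]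
    (μ : Measure Ω) (hμ : μ ≠ 0) (hsemi : Semifinite μ) (hdec : Decomposable μ)
    (U : Set (Set Ω)) (hU : IsMeasureUltrafilter μ U) :
    ∃ ω : Linfty μ →ₐ[ℂ] ℂ,
      (∀ (f : Ω → ℂ) (hf : Measurable f) (C : ℝ) (hC : ∀ᵐ x ∂μ, ‖f x‖ ≤ C),
        UltraLim μ U f (ω (LinftyMk μ f hf C hC))) ∧
      (∀ (F : Set Ω) (hF : MeasurableSet F), F ∈ U ↔ ω (indL μ F hF) = 1) := by
  refine ⟨charHom hU, ?_, ?_⟩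
  · intro f hf C hC
    obtain ⟨a, ha⟩ := exists_limit hU hf hC
    have ht : Filter.Tendsto f (UFilter hU)
        (nhds (charHom hU (LinftyMk μ f hf C hC))) :=
      tendsto_charFun hU _ rfl
    have hae : a = charHom hU (LinftyMk μ f hf C hC) :=
      tendsto_nhds_unique (tendsto_of_closedBall hU ha) ht
    rw [← hae]
    exact ultraLim_of_closedBall hf ha
  · intro F hF
    set a := charHom hU (indL μ F hF) with hadef
    have ht : Filter.Tendsto (F.indicator fun _ => (1 : ℂ)) (UFilter hU) (nhds a) :=
      tendsto_charFun hU _ rfl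
    constructor
    · intro hFU
      have hev : (F.indicator fun _ => (1 : ℂ)) =ᶠ[UFilter hU] fun _ => (1 : ℂ) := by
        filter_upwards [mem_UFilter_of_mem hU hFU] with x hx
        simp [Set.indicator_of_mem hx]
      exact tendsto_nhds_unique (Filter.Tendsto.congr' hev ht) tendsto_const_nhds
    · intro h1
      by_contra hFU
      have hFc : Fᶜ ∈ U := (hU.mem_or_compl_mem F hF).resolve_left hFU
      have hev : (F.indicator fun _ => (1 : ℂ)) =ᶠ[UFilter hU] fun _ => (0 : ℂ) := by
        filter_upwards [mem_UFilter_of_mem hU hFc] with x hx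
        simp [Set.indicator_of_notMem hx]
      have h0 : a = 0 :=
        tendsto_nhds_unique (Filter.Tendsto.congr' hev ht) tendsto_const_nhds
      rw [h1] at h0
      exact one_ne_zero h0
end

section
/- Let Λ denote the set of characters of L^∞([0,1], λ), equipped with the topology of pointwise convergence on L^∞([0,1], λ). For every a ∈ (0,1], the set Ω_{ℒ_a} = {ω ∈ Λ : ω([1_X]) = 1 for all X ∈ ℒ_a} has empty interior in Λ, and for every a ∈ [0,1), the set Ω_{ℛ_a} = {ω ∈ Λ : ω([1_X]) = 1 for all X ∈ ℛ_a} has empty interior in Λ. -/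
open MeasureTheory

/-- A *filter on the measure algebra* of `(Ω, μ)`: a collection of measurable subsets of
`Ω` containing `Ω`, closed under intersection and under almost-everywhere enlargement. -/
structure IsMeasureFilter {Ω : Type*} [MeasurableSpace Ω] (μ : Measure Ω)
    (F : Set (Set Ω)) : Prop where
  measurableSet_of_mem : ∀ A ∈ F, MeasurableSet A
  univ_mem : Set.univ ∈ F
  inter_mem : ∀ A ∈ F, ∀ B ∈ F, A ∩ B ∈ F
  mem_of_ae_subset : ∀ A ∈ F, ∀ B : Set Ω, MeasurableSet B → μ (A \ B) = 0 → B ∈ F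

/-- The topology of pointwise convergence on the set of characters of `L^∞(Ω, μ)`. -/
noncomputable def charTop {Ω : Type*} [MeasurableSpace Ω] (μ : Measure Ω) :
    TopologicalSpace (Linfty μ →ₐ[ℂ] ℂ) :=
  TopologicalSpace.induced (fun φ => (φ : Linfty μ → ℂ)) inferInstance

/-- `Ω_ℱ`: the closed subset of the character space associated to a filter `ℱ` on the
measure algebra, consisting of those characters sending the class of the indicator of
every member of `ℱ` to `1`. -/
def OmegaF {Ω : Type*} [MeasurableSpace Ω] (μ : Measure Ω) (F : Set (Set Ω)) :
    Set (Linfty μ →ₐ[ℂ] ℂ) :=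
  {ω | ∀ (A : Set Ω) (hA : MeasurableSet A), A ∈ F → ω (indL μ A hA) = 1}

/-- `ℱ_K`: the filter on the measure algebra associated to a set `K` of characters,
consisting of the measurable sets whose indicator class is sent to `1` by every character
in `K`. -/
def FilterOf {Ω : Type*} [MeasurableSpace Ω] (μ : Measure Ω)
    (K : Set (Linfty μ →ₐ[ℂ] ℂ)) : Set (Set Ω) :=
  {A | ∃ hA : MeasurableSet A, ∀ ω ∈ K, ω (indL μ A hA) = 1}

/-- Lebesgue measure on the unit interval `[0,1]`, regarded as a measure on the subtype. -/
noncomputable def lam : Measure (Set.Icc (0 : ℝ) 1) :=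
  (MeasureTheory.volume : Measure ℝ).comap Subtype.val

/-- `ℒ_t`: the filter (on the measure algebra of `([0,1], λ)`) of measurable sets almost
containing a left neighborhood `(t − ε, t) ∩ [0,1]` of `t`. -/
def leftF (t : ℝ) : Set (Set (Set.Icc (0 : ℝ) 1)) :=
  {X | MeasurableSet X ∧ ∃ ε : ℝ, 0 < ε ∧
    lam ((Subtype.val ⁻¹' Set.Ioo (t - ε) t) \ X) = 0}

/-- `ℛ_t`: the filter of measurable sets almost containing a right neighborhood
`(t, t + ε) ∩ [0,1]` of `t`. -/
def rightF (t : ℝ) : Set (Set (Set.Icc (0 : ℝ) 1)) :=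
  {X | MeasurableSet X ∧ ∃ ε : ℝ, 0 < ε ∧
    lam ((Subtype.val ⁻¹' Set.Ioo t (t + ε)) \ X) = 0}

/-- `𝒟_t`: the filter of measurable sets almost containing a two-sided neighborhood
`(t − ε, t + ε) ∩ [0,1]` of `t`. -/
def twoSidedF (t : ℝ) : Set (Set (Set.Icc (0 : ℝ) 1)) :=
  {X | MeasurableSet X ∧ ∃ ε : ℝ, 0 < ε ∧
    lam ((Subtype.val ⁻¹' Set.Ioo (t - ε) (t + ε)) \ X) = 0}

section Aux

open Filter Topology

variable {Ω' : Type*} [MeasurableSpace Ω'] {μ : Measure Ω'}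

lemma Linfty_mem (x : Linfty μ) : ∃ f : Ω' → ℂ, Measurable f ∧
    (∃ C : ℝ, ∀ᵐ ω ∂μ, ‖f ω‖ ≤ C) ∧ (x : Filter.Germ (MeasureTheory.ae μ) ℂ) = ↑f := x.2

noncomputable def repFun (x : Linfty μ) : Ω' → ℂ := (Linfty_mem x).choose

lemma repFun_meas (x : Linfty μ) : Measurable (repFun x) := (Linfty_mem x).choose_spec.1

lemma repFun_bound (x : Linfty μ) : ∃ C : ℝ, ∀ᵐ ω ∂μ, ‖repFun x ω‖ ≤ C :=
  (Linfty_mem x).choose_spec.2.1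

lemma repFun_spec (x : Linfty μ) :
    (x : Filter.Germ (MeasureTheory.ae μ) ℂ) = ↑(repFun x) :=
  (Linfty_mem x).choose_spec.2.2

lemma exists_tendsto (𝒰 : Ultrafilter Ω') (h : ↑𝒰 ≤ MeasureTheory.ae μ) (x : Linfty μ) :
    ∃ c : ℂ, Tendsto (repFun x) 𝒰 (𝓝 c) := by
  obtain ⟨C, hC⟩ := repFun_bound x
  have h1 : ∀ᶠ t in (𝒰 : Filter Ω'), repFun x t ∈ Metric.closedBall (0 : ℂ) (max C 0) := by
    filter_upwards [h hC] with t ht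
    rw [Metric.mem_closedBall, dist_eq_norm, sub_zero]; exact ht.trans (le_max_left _ _)
  have h2 : ↑(𝒰.map (repFun x)) ≤ 𝓟 (Metric.closedBall (0 : ℂ) (max C 0)) := by
    rw [Ultrafilter.coe_map, le_principal_iff, mem_map]
    exact h1
  obtain ⟨c, -, hc⟩ := (isCompact_closedBall (0 : ℂ) (max C 0)).ultrafilter_le_nhds
    (𝒰.map (repFun x)) h2
  exact ⟨c, by rwa [Ultrafilter.coe_map] at hc⟩

noncomputable def uCharFun (𝒰 : Ultrafilter Ω') (h : ↑𝒰 ≤ MeasureTheory.ae μ)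
    (x : Linfty μ) : ℂ := (exists_tendsto 𝒰 h x).choose

lemma uCharFun_tendsto (𝒰 : Ultrafilter Ω') (h : ↑𝒰 ≤ MeasureTheory.ae μ) (x : Linfty μ) :
    Tendsto (repFun x) 𝒰 (𝓝 (uCharFun 𝒰 h x)) := (exists_tendsto 𝒰 h x).choose_spec

lemma uCharFun_tendsto' (𝒰 : Ultrafilter Ω') (h : ↑𝒰 ≤ MeasureTheory.ae μ) (x : Linfty μ)
    (f : Ω' → ℂ) (hf : (x : Filter.Germ (MeasureTheory.ae μ) ℂ) = ↑f) :
    Tendsto f 𝒰 (𝓝 (uCharFun 𝒰 h x)) := by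
  have he : f =ᶠ[MeasureTheory.ae μ] repFun x :=
    Filter.Germ.coe_eq.mp (hf.symm.trans (repFun_spec x))
  exact (uCharFun_tendsto 𝒰 h x).congr' (he.filter_mono h).symm

lemma algebraMap_Linfty_germ (r : ℂ) :
    ((algebraMap ℂ (Linfty μ) r : Linfty μ) : Filter.Germ (MeasureTheory.ae μ) ℂ) =
      ((fun _ => r : Ω' → ℂ) : Filter.Germ (MeasureTheory.ae μ) ℂ) := by
  show algebraMap ℂ (Filter.Germ (MeasureTheory.ae μ) ℂ) r = _
  rw [Algebra.algebraMap_eq_smul_one, ← Filter.Germ.coe_one (l := MeasureTheory.ae μ),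
    ← Filter.Germ.coe_smul]
  congr 1
  funext ω
  simp

noncomputable def uChar (𝒰 : Ultrafilter Ω') (h : ↑𝒰 ≤ MeasureTheory.ae μ) :
    Linfty μ →ₐ[ℂ] ℂ where
  toFun := uCharFun 𝒰 h
  map_one' := tendsto_nhds_unique
    (uCharFun_tendsto' 𝒰 h 1 (fun _ => 1)
      (by rw [OneMemClass.coe_one, ← Filter.Germ.coe_one (l := MeasureTheory.ae μ)]; rfl))
    tendsto_const_nhds
  map_zero' := tendsto_nhds_unique
    (uCharFun_tendsto' 𝒰 h 0 (fun _ => 0)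
      (by rw [ZeroMemClass.coe_zero, ← Filter.Germ.coe_zero (l := MeasureTheory.ae μ)]; rfl))
    tendsto_const_nhds
  map_mul' x y := tendsto_nhds_unique
    (uCharFun_tendsto' 𝒰 h (x * y) (repFun x * repFun y)
      (by rw [MulMemClass.coe_mul, repFun_spec x, repFun_spec y, ← Filter.Germ.coe_mul]))
    ((uCharFun_tendsto 𝒰 h x).mul (uCharFun_tendsto 𝒰 h y))
  map_add' x y := tendsto_nhds_unique
    (uCharFun_tendsto' 𝒰 h (x + y) (repFun x + repFun y)
      (by rw [AddMemClass.coe_add, repFun_spec x, repFun_spec y, ← Filter.Germ.coe_add]))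
    ((uCharFun_tendsto 𝒰 h x).add (uCharFun_tendsto 𝒰 h y))
  commutes' r := tendsto_nhds_unique
    (uCharFun_tendsto' 𝒰 h (algebraMap ℂ (Linfty μ) r) (fun _ => r)
      (algebraMap_Linfty_germ r))
    tendsto_const_nhds

lemma uChar_tendsto (𝒰 : Ultrafilter Ω') (h : ↑𝒰 ≤ MeasureTheory.ae μ) (x : Linfty μ)
    (f : Ω' → ℂ) (hf : (x : Filter.Germ (MeasureTheory.ae μ) ℂ) = ↑f) :
    Tendsto f 𝒰 (𝓝 (uChar 𝒰 h x)) := uCharFun_tendsto' 𝒰 h x f hf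

lemma indL_germ (A : Set Ω') (hA : MeasurableSet A) :
    ((indL μ A hA : Linfty μ) : Filter.Germ (MeasureTheory.ae μ) ℂ) =
      ((A.indicator fun _ => (1 : ℂ)) : Filter.Germ (MeasureTheory.ae μ) ℂ) := rfl

lemma indL_congr {A B : Set Ω'} (h : A = B) (hA : MeasurableSet A) (hB : MeasurableSet B) :
    indL μ A hA = indL μ B hB := by subst h; rfl

lemma indL_mul (A B : Set Ω') (hA : MeasurableSet A) (hB : MeasurableSet B) :
    indL μ A hA * indL μ B hB = indL μ (A ∩ B) (hA.inter hB) := by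
  apply Subtype.ext
  rw [MulMemClass.coe_mul, indL_germ, indL_germ, indL_germ, ← Filter.Germ.coe_mul]
  congr 1
  funext t
  by_cases h1 : t ∈ A <;> by_cases h2 : t ∈ B <;>
    simp [Set.indicator_apply, h1, h2, Set.mem_inter_iff]

lemma indL_univ : indL μ Set.univ MeasurableSet.univ = 1 := by
  apply Subtype.ext
  rw [indL_germ, OneMemClass.coe_one, ← Filter.Germ.coe_one (l := MeasureTheory.ae μ)]
  congr 1
  funext t
  simp [Set.indicator_apply]

lemma indL_null {A : Set Ω'} (hA : MeasurableSet A) (h0 : μ A = 0) :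
    indL μ A hA = 0 := by
  apply Subtype.ext
  rw [indL_germ, ZeroMemClass.coe_zero, ← Filter.Germ.coe_zero (l := MeasureTheory.ae μ)]
  refine Filter.Germ.coe_eq.mpr ?_
  refine MeasureTheory.ae_iff.mpr (measure_mono_null ?_ h0)
  intro t ht
  by_contra htA
  exact ht (Set.indicator_of_notMem htA _)

/-- Key spectral lemma: the indicator of `{‖f - φ x‖ < δ}` is sent to `1`. -/
lemma char_ball_one (φ : Linfty μ →ₐ[ℂ] ℂ) (x : Linfty μ) {δ : ℝ} (hδ : 0 < δ) :
    φ (indL μ {t | ‖repFun x t - φ x‖ < δ}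
      (measurableSet_lt ((repFun_meas x).sub measurable_const).norm measurable_const)) = 1 := by
  set c : ℂ := φ x with hc
  set A : Set Ω' := {t | ‖repFun x t - c‖ < δ} with hAdef
  set hA : MeasurableSet A :=
    (measurableSet_lt ((repFun_meas x).sub measurable_const).norm measurable_const)
  set g : Ω' → ℂ := fun t => if t ∈ A then 0 else (repFun x t - c)⁻¹ with hg
  have hgm : Measurable g := Measurable.ite hA measurable_const
    ((repFun_meas x).sub measurable_const).inv
  have hgb : ∀ᵐ t ∂μ, ‖g t‖ ≤ δ⁻¹ := by
    refine Filter.Eventually.of_forall fun t => ?_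
    by_cases ht : t ∈ A
    · simp [hg, ht, inv_nonneg.mpr hδ.le]
    · have h1 : δ ≤ ‖repFun x t - c‖ := not_lt.mp ht
      simp only [hg, if_neg ht, norm_inv]
      exact inv_anti₀ hδ h1
  set G : Linfty μ := LinftyMk μ g hgm δ⁻¹ hgb with hG
  have key : G * (x - algebraMap ℂ (Linfty μ) c) = 1 - indL μ A hA := by
    apply Subtype.ext
    rw [MulMemClass.coe_mul, AddSubgroupClass.coe_sub, AddSubgroupClass.coe_sub,
      OneMemClass.coe_one, repFun_spec x, algebraMap_Linfty_germ, indL_germ]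
    rw [show ((G : Linfty μ) : Filter.Germ (MeasureTheory.ae μ) ℂ) =
      (g : Filter.Germ (MeasureTheory.ae μ) ℂ) from rfl]
    rw [← Filter.Germ.coe_one (l := MeasureTheory.ae μ), ← Filter.Germ.coe_sub,
      ← Filter.Germ.coe_sub, ← Filter.Germ.coe_mul]
    congr 1
    funext t
    by_cases ht : t ∈ A
    · simp [hg, if_pos ht, Set.indicator_of_mem ht]
    · have hne : repFun x t - c ≠ 0 := by
        intro h0
        apply ht
        show ‖repFun x t - c‖ < δ
        rw [h0, norm_zero]; exact hδ
      simp [hg, if_neg ht, Set.indicator_of_notMem ht, inv_mul_cancel₀ hne]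
  have h2 := congrArg φ key
  rw [map_mul, map_sub, map_sub, map_one, AlgHom.commutes, ← hc] at h2
  simp only [Algebra.algebraMap_self_apply, sub_self, mul_zero] at h2
  exact (sub_eq_zero.mp h2.symm).symm

end Aux

section Aux2

open Filter Topology

variable {Ω' : Type*} [MeasurableSpace Ω'] {μ : Measure Ω'}

lemma char_biInter_one (φ : Linfty μ →ₐ[ℂ] ℂ) {ι : Type*} (I : Finset ι) (A : ι → Set Ω')
    (hA : ∀ i, MeasurableSet (A i)) (h1 : ∀ i ∈ I, φ (indL μ (A i) (hA i)) = 1) :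
    φ (indL μ (⋂ i ∈ I, A i)
      (MeasurableSet.biInter I.countable_toSet (fun i _ => hA i))) = 1 := by
  classical
  induction I using Finset.induction_on with
  | empty =>
      rw [indL_congr (by simp) _ MeasurableSet.univ, indL_univ, map_one]
  | @insert j s hj ih =>
      have hrec : MeasurableSet (⋂ i ∈ s, A i) :=
        MeasurableSet.biInter s.countable_toSet (fun i _ => hA i)
      rw [indL_congr (Finset.set_biInter_insert j s A) _ ((hA j).inter hrec),
        ← indL_mul (A j) (⋂ i ∈ s, A i) (hA j) hrec, map_mul,
        h1 j (Finset.mem_insert_self j s), one_mul]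
      exact ih (fun i hi => h1 i (Finset.mem_insert_of_mem hi))

/-- Main abstract lemma: if `F` contains sets of arbitrarily small (positive) measure,
then `Ω_F` has empty interior in the character space. -/
lemma interior_OmegaF_empty [IsFiniteMeasure μ] (F : Set (Set Ω'))
    (hF : ∀ η : ℝ, 0 < η → ∃ X, MeasurableSet X ∧ X ∈ F ∧ μ X ≤ ENNReal.ofReal η) :
    @interior _ (charTop μ) (OmegaF μ F) = ∅ := by
  classical
  letI : TopologicalSpace (Linfty μ →ₐ[ℂ] ℂ) := charTop μ
  rw [Set.eq_empty_iff_forall_notMem]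
  intro φ hφ
  obtain ⟨V, hVsub, hVopen, hφV⟩ := mem_interior.mp hφ
  have hVopen' : @IsOpen _ (TopologicalSpace.induced
      (fun ψ : Linfty μ →ₐ[ℂ] ℂ => (ψ : Linfty μ → ℂ)) Pi.topologicalSpace) V := hVopen
  rw [isOpen_induced_iff] at hVopen'
  obtain ⟨W, hWopen, hWV⟩ := hVopen'
  rw [isOpen_pi_iff] at hWopen
  have hφW : (fun y => φ y) ∈ W := by rw [← hWV] at hφV; exact hφV
  obtain ⟨I, u, hIu, hpiW⟩ := hWopen _ hφW
  -- radii
  have hδ : ∀ i ∈ I, ∃ δ : ℝ, 0 < δ ∧ Metric.ball (φ i) δ ⊆ u i := by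
    intro i hi
    obtain ⟨δ, hδpos, hδsub⟩ := Metric.isOpen_iff.mp (hIu i hi).1 _ (hIu i hi).2
    exact ⟨δ, hδpos, hδsub⟩
  choose! δ hδpos hδsub using hδ
  -- the sets A i
  set A : Linfty μ → Set Ω' := fun i => {t | ‖repFun i t - φ i‖ < δ i / 2} with hAdef
  have hAmeas : ∀ i, MeasurableSet (A i) := fun i =>
    measurableSet_lt ((repFun_meas i).sub measurable_const).norm measurable_const
  have hA1 : ∀ i ∈ I, φ (indL μ (A i) (hAmeas i)) = 1 := fun i hi =>
    char_ball_one φ i (half_pos (hδpos i hi))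
  set B : Set Ω' := ⋂ i ∈ I, A i with hBdef
  have hBmeas : MeasurableSet B := MeasurableSet.biInter I.countable_toSet (fun i _ => hAmeas i)
  have hB1 : φ (indL μ B hBmeas) = 1 := char_biInter_one φ I A hAmeas hA1
  have hBpos : μ B ≠ 0 := by
    intro h0
    rw [indL_null hBmeas h0, map_zero] at hB1
    exact zero_ne_one hB1
  have hBfin : μ B ≠ ⊤ := measure_ne_top μ B
  set η : ℝ := (μ B).toReal / 2 with hη
  have hηpos : 0 < η := half_pos (ENNReal.toReal_pos hBpos hBfin)
  obtain ⟨X, hXm, hXF, hXsmall⟩ := hF η hηpos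
  have hXlt : μ X < μ B := by
    refine lt_of_le_of_lt hXsmall ?_
    rw [hη, ENNReal.ofReal_div_of_pos two_pos, ENNReal.ofReal_toReal hBfin]
    simpa using ENNReal.half_lt_self hBpos hBfin
  set B' : Set Ω' := B \ X with hB'def
  have hB'pos : μ B' ≠ 0 := by
    intro h0
    have : μ B ≤ μ B' + μ X := by
      refine (measure_mono (fun t ht => ?_)).trans (measure_union_le _ _)
      by_cases h : t ∈ X
      · exact Or.inr h
      · exact Or.inl ⟨ht, h⟩
    rw [h0, zero_add] at this
    exact absurd this (not_le.mpr hXlt)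
  -- ultrafilter containing B' and finer than ae μ
  have hNeBot : (MeasureTheory.ae μ ⊓ 𝓟 B').NeBot := by
    rw [Filter.inf_principal_neBot_iff]
    intro U hU
    rw [Set.nonempty_iff_ne_empty]
    intro hE
    apply hB'pos
    refine measure_mono_null (fun t ht => ?_) hU
    intro htU
    exact Set.eq_empty_iff_forall_notMem.mp hE t ⟨htU, ht⟩
  obtain ⟨𝒰, h𝒰⟩ := Ultrafilter.exists_le (MeasureTheory.ae μ ⊓ 𝓟 B')
  have h𝒰ae : ↑𝒰 ≤ MeasureTheory.ae μ := h𝒰.trans inf_le_left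
  have hB'𝒰 : B' ∈ 𝒰 := (h𝒰.trans inf_le_right) (mem_principal_self B')
  set ψ := uChar 𝒰 h𝒰ae with hψ
  -- ψ lies in V
  have hψW : (fun y => ψ y) ∈ W := by
    apply hpiW
    rw [Set.mem_pi]
    intro i hi
    have htend : Tendsto (repFun i) 𝒰 (𝓝 (ψ i)) :=
      uChar_tendsto 𝒰 h𝒰ae i (repFun i) (repFun_spec i)
    have hmem : ψ i ∈ Metric.closedBall (φ i) (δ i / 2) := by
      refine Metric.isClosed_closedBall.mem_of_tendsto htend ?_
      refine Filter.mem_of_superset hB'𝒰 (fun t ht => ?_)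
      have htB : t ∈ B := ht.1
      have hAi : t ∈ A i := by
        rw [hBdef] at htB
        exact Set.mem_iInter₂.mp htB i hi
      show repFun i t ∈ Metric.closedBall (φ i) (δ i / 2)
      rw [Metric.mem_closedBall, dist_eq_norm]
      exact le_of_lt hAi
    exact hδsub i hi (Metric.closedBall_subset_ball (half_lt_self (hδpos i hi)) hmem)
  have hψΩ : ψ ∈ OmegaF μ F := hVsub (by rw [← hWV]; exact hψW)
  have hψX : ψ (indL μ X hXm) = 1 := hψΩ X hXm hXF
  -- but ψ kills the indicator of X
  have hψX0 : ψ (indL μ X hXm) = 0 := by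
    have htend : Tendsto (X.indicator fun _ => (1 : ℂ)) 𝒰 (𝓝 (ψ (indL μ X hXm))) :=
      uChar_tendsto 𝒰 h𝒰ae (indL μ X hXm) _ (indL_germ X hXm)
    have hzero : (X.indicator fun _ => (1 : ℂ)) =ᶠ[↑𝒰] (fun _ => (0 : ℂ)) := by
      refine Filter.mem_of_superset hB'𝒰 (fun t ht => ?_)
      show X.indicator (fun _ => (1 : ℂ)) t = 0
      exact Set.indicator_of_notMem ht.2 _
    exact tendsto_nhds_unique (htend.congr' hzero) tendsto_const_nhds
  rw [hψX] at hψX0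
  exact one_ne_zero hψX0

end Aux2

section Aux3

open Filter Topology

lemma lam_apply {s : Set (Set.Icc (0 : ℝ) 1)} (hs : MeasurableSet s) :
    lam s = MeasureTheory.volume (Subtype.val '' s) := by
  rw [lam, MeasureTheory.Measure.comap_apply _ Subtype.coe_injective
    (fun t ht => (measurableSet_Icc : MeasurableSet (Set.Icc (0:ℝ) 1)).subtype_image ht) _ hs]

instance : IsFiniteMeasure lam := by
  constructor
  rw [lam_apply MeasurableSet.univ, Set.image_univ, Subtype.range_coe]
  simp [Real.volume_Icc]

lemma lam_preimage_le (l r : ℝ) :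
    lam (Subtype.val ⁻¹' Set.Ioo l r) ≤ ENNReal.ofReal (r - l) := by
  rw [lam_apply (measurableSet_Ioo.preimage measurable_subtype_coe)]
  refine le_trans (measure_mono (Set.image_preimage_subset _ _)) ?_
  rw [Real.volume_Ioo]

end Aux3

/-- Theorem III.15. In the spectrum `Λ` of `L^∞([0,1], λ)` (the
character space, with the topology of pointwise convergence), each of the closed sets
`Ω_{ℒ_a}` (for `0 < a ≤ 1`) and `Ω_{ℛ_a}` (for `0 ≤ a < 1`) has empty interior. -/
theorem onesided_limit_sets_have_empty_interior :
    (∀ a : ℝ, a ∈ Set.Ioc (0 : ℝ) 1 →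
      @interior _ (charTop lam) (OmegaF lam (leftF a)) = ∅) ∧
    (∀ a : ℝ, a ∈ Set.Ico (0 : ℝ) 1 →
      @interior _ (charTop lam) (OmegaF lam (rightF a)) = ∅) := by
  constructor
  · intro a _
    apply interior_OmegaF_empty
    intro η hη
    refine ⟨Subtype.val ⁻¹' Set.Ioo (a - η) a,
      measurableSet_Ioo.preimage measurable_subtype_coe,
      ⟨measurableSet_Ioo.preimage measurable_subtype_coe, η, hη, by simp⟩, ?_⟩
    have := lam_preimage_le (a - η) a
    simpa using this
  · intro a _
    apply interior_OmegaF_empty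
    intro η hη
    refine ⟨Subtype.val ⁻¹' Set.Ioo a (a + η),
      measurableSet_Ioo.preimage measurable_subtype_coe,
      ⟨measurableSet_Ioo.preimage measurable_subtype_coe, η, hη, by simp⟩, ?_⟩
    have := lam_preimage_le a (a + η)
    simpa using this
end
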